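/- Let n ≥ 1, let k ≥ 2 be even, let r ≥ 0, and let S = (Fin (k+1)) → (Fin n → ZMod 2). Fix any x ∈ S and let D be the single-query test that accepts a state y ∈ S exactly when the XOR of all k+1 blocks of y equals the XOR of all k+1 blocks of x. Then: (a) for every tuple of round functions f₁, …, f_r : (Fin n → ZMod 2) → (Fin n → ZMod 2), the output of the r-round n:kn-UFN2 on x is accepted by D; and (b) for a uniformly random permutation π of S, D accepts π(x) with probability exactly 1/2^n. Hence the test distinguishes the r-round n:kn-UFN2 (with any, in particular random, round functions) from a uniformly random permutation with advantage exactly 1 − 1/2^n. -/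

import Mathlib

/-- An `n`-bit block, i.e. a bit string of length `n`. -/
abbrev Blk (n : ℕ) : Type := Fin n → ZMod 2

/-- The state of a `(k+1)`-block Feistel network: `k+1` blocks of `n` bits each. -/
abbrev St (n k : ℕ) : Type := Fin (k + 1) → Blk n

/-- One round of the `n:kn`-UFN2 with round function `f : Blk n → Blk n`:
`(L₁, …, L_k, R) ↦ (R, L₁ ⊕ f R, …, L_k ⊕ f R)`.
State coordinates `0, …, k-1` are `L₁, …, L_k` and coordinate `k` is `R`. -/
def ufn2Round {n k : ℕ} (f : Blk n → Blk n) (s : St n k) : St n k :=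
  fun i =>
    if h : (i : ℕ) = 0 then s (Fin.last k)
    else s ⟨(i : ℕ) - 1, by have := i.isLt; omega⟩ + f (s (Fin.last k))

/-- The `r`-round `n:kn`-UFN2 with round functions `f 0, …, f (r-1)`, applied with `f 0`
first. -/
def ufn2Run {n k : ℕ} : (r : ℕ) → (Fin r → (Blk n → Blk n)) → St n k → St n k
  | 0, _, s => s
  | r + 1, f, s => ufn2Round (f (Fin.last r)) (ufn2Run r (fun i => f i.castSucc) s)

lemma ufn2Round_sum {n k : ℕ} (hke : Even k) (f : Blk n → Blk n) (s : St n k) :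
    ∑ i : Fin (k+1), ufn2Round f s i = ∑ i : Fin (k+1), s i := by
  obtain ⟨m, hm⟩ := hke
  rw [Fin.sum_univ_succ]
  have h0 : ufn2Round f s 0 = s (Fin.last k) := by simp [ufn2Round]
  have hsucc : ∀ i : Fin k, ufn2Round f s i.succ = s i.castSucc + f (s (Fin.last k)) := by
    intro i
    have hne : ((i.succ : Fin (k+1)) : ℕ) ≠ 0 := by simp
    have heq : (⟨((i.succ : Fin (k+1)) : ℕ) - 1, by have := (i.succ : Fin (k+1)).isLt; omega⟩ :
        Fin (k+1)) = i.castSucc := by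
      ext; simp
    simp only [ufn2Round, dif_neg hne, heq]
  rw [h0, Finset.sum_congr rfl (fun i _ => hsucc i), Finset.sum_add_distrib,
    Finset.sum_const]
  have hcard : (Finset.univ : Finset (Fin k)).card = m + m := by simp [hm]
  have hz : (m + m) • f (s (Fin.last k)) = 0 := by
    rw [add_nsmul]
    ext j
    simp only [Pi.add_apply, Pi.zero_apply]
    exact CharTwo.add_self_eq_zero _
  rw [hcard, hz, add_zero, Fin.sum_univ_castSucc (f := s)]
  exact add_comm _ _

lemma perm_fiber_card {S : Type*} [Fintype S] [DecidableEq S] (x y : S) :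
    (Finset.univ.filter fun π : Equiv.Perm S => π x = y).card =
    (Finset.univ.filter fun π : Equiv.Perm S => π x = x).card := by
  apply Finset.card_bij' (fun π _ => Equiv.swap x y * π) (fun π _ => Equiv.swap x y * π)
  · intro π hπ
    simp only [Finset.mem_filter, Finset.mem_univ, true_and] at hπ ⊢
    simp [hπ]
  · intro π hπ
    simp only [Finset.mem_filter, Finset.mem_univ, true_and] at hπ ⊢
    simp [hπ]
  · intro π _
    simp [← mul_assoc]
  · intro π _
    simp [← mul_assoc]

lemma card_filter_perm {S : Type*} [Fintype S] [DecidableEq S] (x : S) (P : S → Prop)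
    [DecidablePred P] :
    (Finset.univ.filter fun π : Equiv.Perm S => P (π x)).card =
    (Finset.univ.filter P).card * (Finset.univ.filter fun π : Equiv.Perm S => π x = x).card := by
  rw [Finset.card_eq_sum_card_fiberwise (f := fun π : Equiv.Perm S => π x)
    (t := Finset.univ.filter P) (by intro π hπ; simp only [Finset.mem_coe, Finset.mem_filter,
      Finset.mem_univ, true_and] at hπ ⊢; exact hπ)]
  rw [Finset.sum_congr rfl (fun y hy => ?_), Finset.sum_const, smul_eq_mul]
  have hy' : P y := (Finset.mem_filter.mp hy).2
  rw [show ((Finset.univ.filter fun π : Equiv.Perm S => P (π x)).filter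
      fun π => π x = y) = Finset.univ.filter fun π : Equiv.Perm S => π x = y by
    ext π
    simp only [Finset.mem_filter, Finset.mem_univ, true_and]
    constructor
    · rintro ⟨_, h⟩; exact h
    · intro h; exact ⟨h ▸ hy', h⟩]
  exact perm_fiber_card x y

lemma card_perm_eq {S : Type*} [Fintype S] [DecidableEq S] (x : S) :
    Fintype.card (Equiv.Perm S) =
    Fintype.card S * (Finset.univ.filter fun π : Equiv.Perm S => π x = x).card := by
  have := card_filter_perm (S := S) x (fun _ => True)
  simpa using this

lemma st_fiber_card {n k : ℕ} (b b' : Blk n) :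
    (Finset.univ.filter fun y : St n k => ∑ i, y i = b).card =
    (Finset.univ.filter fun y : St n k => ∑ i, y i = b').card := by
  have hδ : ∀ d : Blk n, ∑ i : Fin (k+1), (fun i : Fin (k+1) => if i = 0 then d else 0) i = d := by
    intro d
    simpa using Finset.sum_ite_eq' Finset.univ (0 : Fin (k+1)) (fun _ => d)
  apply Finset.card_bij' (fun y _ => y + fun i => if i = 0 then b' - b else 0)
    (fun y _ => y + fun i => if i = 0 then b - b' else 0)
  · intro y _
    funext i
    by_cases h : i = 0 <;> simp [h] <;> abel
  · intro y _
    funext i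
    by_cases h : i = 0 <;> simp [h] <;> abel
  · intro y hy
    simp only [Finset.mem_filter, Finset.mem_univ, true_and] at hy ⊢
    simp only [Pi.add_apply]
    rw [Finset.sum_add_distrib, hy, hδ]
    abel
  · intro y hy
    simp only [Finset.mem_filter, Finset.mem_univ, true_and] at hy ⊢
    simp only [Pi.add_apply]
    rw [Finset.sum_add_distrib, hy, hδ]
    abel

lemma st_card_eq {n k : ℕ} (c : Blk n) :
    Fintype.card (St n k) =
    2 ^ n * (Finset.univ.filter fun y : St n k => ∑ i, y i = c).card := by
  have h := Finset.card_eq_sum_card_fiberwise (s := (Finset.univ : Finset (St n k)))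
    (t := (Finset.univ : Finset (Blk n))) (f := fun y => ∑ i, y i)
    (fun y _ => Finset.mem_univ _)
  rw [Finset.sum_congr rfl (fun b _ => ?_)] at h
  · rw [Fintype.card, h, Finset.sum_const, smul_eq_mul]
    congr 1
    simpa using (Fintype.card_fun : Fintype.card (Blk n) = _)
  · exact st_fiber_card b c

lemma ufn2Run_sum {n k : ℕ} (hke : Even k) :
    ∀ (r : ℕ) (f : Fin r → (Blk n → Blk n)) (s : St n k),
      ∑ i : Fin (k+1), ufn2Run r f s i = ∑ i : Fin (k+1), s i
  | 0, _, _ => rfl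
  | r + 1, f, s => by
    rw [ufn2Run, ufn2Round_sum hke]
    exact ufn2Run_sum hke r _ s

/-- **Theorem 4.1.** Let `k ≥ 2` be even and fix a state `x`.  Consider the
single-query test that accepts a state `y` exactly when the XOR of all `k+1` blocks of `y`
equals the XOR of all `k+1` blocks of `x`.  Then (a) for every tuple of round functions, the
output of the `r`-round `n:kn`-UFN2 on `x` is accepted; and (b) for a uniformly random
permutation `π` of the state space, `π x` is accepted with probability exactly `1/2^n`.
Hence the test distinguishes the `r`-round `n:kn`-UFN2 from a uniformly random permutation
with advantage exactly `1 − 1/2^n`. -/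
theorem ufn2_even_not_pseudorandom (n k r : ℕ) (hn : 1 ≤ n) (hk : 2 ≤ k) (hke : Even k)
    (x : St n k) :
    (∀ f : Fin r → (Blk n → Blk n),
      ∑ i : Fin (k + 1), ufn2Run r f x i = ∑ i : Fin (k + 1), x i) ∧
    ((Finset.univ.filter (fun π : Equiv.Perm (St n k) =>
        ∑ i : Fin (k + 1), π x i = ∑ i : Fin (k + 1), x i)).card : ℝ) /
      (Fintype.card (Equiv.Perm (St n k)) : ℝ) = 1 / (2 : ℝ) ^ n := by
  constructor
  · intro f
    exact ufn2Run_sum hke r f x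
  · have hA := card_filter_perm (S := St n k) x
      (fun y => ∑ i : Fin (k+1), y i = ∑ i : Fin (k+1), x i)
    have hP := card_perm_eq (S := St n k) x
    have hS := st_card_eq (n := n) (k := k) (∑ i : Fin (k+1), x i)
    rw [hS] at hP
    rw [hA, hP]
    have hM : 0 < (Finset.univ.filter fun π : Equiv.Perm (St n k) => π x = x).card :=
      Finset.card_pos.mpr ⟨1, by simp⟩
    have ha : 0 < (Finset.univ.filter fun y : St n k =>
        ∑ i : Fin (k+1), y i = ∑ i : Fin (k+1), x i).card :=
      Finset.card_pos.mpr ⟨x, by simp⟩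
    have h1 : (0:ℝ) < ((Finset.univ.filter fun π : Equiv.Perm (St n k) => π x = x).card : ℝ) := by
      exact_mod_cast hM
    have h2 : (0:ℝ) < ((Finset.univ.filter fun y : St n k =>
        ∑ i : Fin (k+1), y i = ∑ i : Fin (k+1), x i).card : ℝ) := by
      exact_mod_cast ha
    push_cast
    rw [div_eq_div_iff (by positivity) (by positivity)]
    ring
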